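/- Let l, m₁, ρ be real numbers with l > 0, m₁ > 0, ρ > 0 and let 0 < b₁ < l. Then there exists λ with 0 < λ < π/l such that sin(λl)/λ − (m₁/ρ)·sin(λb₁)·sin(λ(l−b₁)) = 0. Hence, for any location of the discrete mass m₁ in (0, l), the first eigenvalue of the continuous-discrete problem is strictly smaller than the first eigenvalue π/l of the corresponding continuous problem. -/

import Mathlib

open Real Set

/-- For any location `b₁ ∈ (0, l)` of the discrete mass, the characteristic function
has a root strictly below `π/l`: the first eigenvalue of the continuous-discrete
problem is strictly smaller than the first eigenvalue of the continuous problem. -/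
theorem first_eigenvalue_decreases_with_load
    (l m₁ ρ b₁ : ℝ) (hl : 0 < l) (hm : 0 < m₁) (hρ : 0 < ρ)
    (hb₁ : 0 < b₁) (hb₁l : b₁ < l) :
    ∃ lam : ℝ, 0 < lam ∧ lam < π / l ∧
      Real.sin (lam * l) / lam
        - (m₁ / ρ) * Real.sin (lam * b₁) * Real.sin (lam * (l - b₁)) = 0 := by
  set c : ℝ := m₁ / ρ with hc
  have hcpos : 0 < c := div_pos hm hρ
  set g : ℝ → ℝ := fun lam =>
    Real.sin (lam * l) / lam - c * Real.sin (lam * b₁) * Real.sin (lam * (l - b₁))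
    with hg
  have hlb : 0 < l - b₁ := by linarith
  set K : ℝ := l ^ 3 / 4 + c * (b₁ * (l - b₁)) with hK
  have hKpos : 0 < K := by rw [hK]; positivity
  clear_value c g K
  have hπl : 0 < π / l := div_pos Real.pi_pos hl
  obtain ⟨lam₀, hlam₀pos, hA, hB, hC⟩ :
      ∃ lam₀ : ℝ, 0 < lam₀ ∧ lam₀ ≤ 1 / l ∧ lam₀ ≤ π / (2 * l) ∧
        lam₀ ≤ Real.sqrt (l / (2 * K)) := by
    refine ⟨min (1 / l) (min (π / (2 * l)) (Real.sqrt (l / (2 * K)))), ?_, ?_, ?_, ?_⟩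
    · exact lt_min (by positivity)
        (lt_min (by positivity) (Real.sqrt_pos.2 (by positivity)))
    · exact min_le_left _ _
    · exact le_trans (min_le_right _ _) (min_le_left _ _)
    · exact le_trans (min_le_right _ _) (min_le_right _ _)
  have hlam₀lt : lam₀ < π / l := by
    have h2 : π / (2 * l) < π / l := by
      apply div_lt_div_of_pos_left Real.pi_pos hl; linarith
    linarith
  -- g lam₀ > 0
  have hglam₀ : 0 < g lam₀ := by
    have h1l : lam₀ * l ≤ 1 := by
      calc lam₀ * l ≤ (1 / l) * l := by nlinarith
        _ = 1 := by field_simp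
    have hll : 0 < lam₀ * l := mul_pos hlam₀pos hl
    have hsin : lam₀ * l - (lam₀ * l) ^ 3 / 4 < Real.sin (lam₀ * l) :=
      by have := Real.sin_gt_sub_cube hll; linarith [pow_pos hll 3]
    have habs : |Real.sin (lam₀ * b₁) * Real.sin (lam₀ * (l - b₁))|
        ≤ (lam₀ * b₁) * (lam₀ * (l - b₁)) := by
      rw [abs_mul]
      have h1 : |Real.sin (lam₀ * b₁)| ≤ lam₀ * b₁ := by
        have := Real.abs_sin_le_abs (x := lam₀ * b₁)
        rwa [abs_of_pos (mul_pos hlam₀pos hb₁)] at this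
      have h2 : |Real.sin (lam₀ * (l - b₁))| ≤ lam₀ * (l - b₁) := by
        have := Real.abs_sin_le_abs (x := lam₀ * (l - b₁))
        rwa [abs_of_pos (mul_pos hlam₀pos hlb)] at this
      exact mul_le_mul h1 h2 (abs_nonneg _) (le_of_lt (mul_pos hlam₀pos hb₁))
    have hprod : Real.sin (lam₀ * b₁) * Real.sin (lam₀ * (l - b₁))
        ≤ lam₀ ^ 2 * (b₁ * (l - b₁)) := by
      have := (abs_le.1 habs).2
      nlinarith
    have hsq : lam₀ ^ 2 * K < l := by
      have h2 : lam₀ ^ 2 ≤ l / (2 * K) := by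
        have := Real.sq_sqrt (show (0:ℝ) ≤ l / (2 * K) by positivity)
        nlinarith [Real.sqrt_nonneg (l / (2 * K))]
      have h3 : lam₀ ^ 2 * K ≤ l / (2 * K) * K :=
        mul_le_mul_of_nonneg_right h2 (le_of_lt hKpos)
      have heq : l / (2 * K) * K = l / 2 := by field_simp
      rw [heq] at h3
      linarith
    have hdiv : l - lam₀ ^ 2 * (l ^ 3 / 4) < Real.sin (lam₀ * l) / lam₀ := by
      rw [lt_div_iff₀ hlam₀pos]
      nlinarith
    have hcprod : c * (Real.sin (lam₀ * b₁) * Real.sin (lam₀ * (l - b₁)))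
        ≤ c * (lam₀ ^ 2 * (b₁ * (l - b₁))) :=
      mul_le_mul_of_nonneg_left hprod (le_of_lt hcpos)
    simp only [hg]
    nlinarith [hK]
  -- g (π / l) < 0
  have hgend : g (π / l) < 0 := by
    have hπll : (π / l) * l = π := div_mul_cancel₀ _ (ne_of_gt hl)
    have hb2 : (π / l) * b₁ < π := by
      rw [div_mul_eq_mul_div, div_lt_iff₀ hl]
      nlinarith [Real.pi_pos]
    have hs1 : 0 < Real.sin ((π / l) * b₁) :=
      Real.sin_pos_of_pos_of_lt_pi (mul_pos hπl hb₁) hb2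
    have hb4 : (π / l) * (l - b₁) < π := by
      rw [div_mul_eq_mul_div, div_lt_iff₀ hl]
      nlinarith [Real.pi_pos]
    have hs2 : 0 < Real.sin ((π / l) * (l - b₁)) :=
      Real.sin_pos_of_pos_of_lt_pi (mul_pos hπl hlb) hb4
    simp only [hg, hπll, Real.sin_pi, zero_div]
    have := mul_pos (mul_pos hcpos hs1) hs2
    linarith
  -- continuity of g on [lam₀, π/l]
  have hcont : ContinuousOn g (Icc lam₀ (π / l)) := by
    rw [hg]
    apply ContinuousOn.sub
    · apply ContinuousOn.div
      · exact (Real.continuous_sin.comp (continuous_id.mul continuous_const)).continuousOn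
      · exact continuousOn_id
      · intro x hx; exact ne_of_gt (lt_of_lt_of_le hlam₀pos hx.1)
    · exact ((continuous_const.mul (Real.continuous_sin.comp
        (continuous_id.mul continuous_const))).mul (Real.continuous_sin.comp
        (continuous_id.mul continuous_const))).continuousOn
  have hmem : (0:ℝ) ∈ Icc (g (π / l)) (g lam₀) := ⟨le_of_lt hgend, le_of_lt hglam₀⟩
  obtain ⟨x, hxI, hgx⟩ := intermediate_value_Icc' (le_of_lt hlam₀lt) hcont hmem
  simp only [hg] at hgx
  refine ⟨x, lt_of_lt_of_le hlam₀pos hxI.1, lt_of_le_of_ne hxI.2 ?_, hgx⟩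
  intro h
  rw [h] at hgx
  simp only [hg] at hgend
  exact absurd hgx (ne_of_lt hgend)
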